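/- For n ≥ 1 and generalized partitions λ, μ ∈ Z_+^n, and for any d ≥ 0 such that λ + (d^n) and μ + (d^n) are partitions, the Kostka–Foulkes polynomial K_{λ+(d^n), μ+(d^n)}(q) is independent of the choice of such d. -/

import Mathlib

/-!
STATEMENT 11: Stability of Kostka–Foulkes polynomials: for generalized partitions
`λ, μ ∈ ℤ₊ⁿ` and any `d ≥ 0` with `λ + (dⁿ)` and `μ + (dⁿ)` partitions, the
Kostka–Foulkes polynomial `K_{λ+(dⁿ), μ+(dⁿ)}(q)` does not depend on the choice of `d`.

`K_{λμ}(q)` is defined via the Lascoux–Schützenberger charge: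
`K_{λμ}(q) = Σ_{T ∈ SST_{[n]}(λ)_μ} q^{c(T)}`; we state the equality of all
`q`-coefficients.
-/

namespace KP

/-! ### The Lascoux–Schützenberger charge -/

/-- The index of the letter `r` in the charge of a standard word. -/
def chargeIdx (w : List ℕ) : ℕ → ℕ
  | 0 => 0
  | 1 => 0
  | (r+2) => chargeIdx w (r+1) + (if w.idxOf (r+1) < w.idxOf (r+2) then 1 else 0)

/-- The charge of a standard word (a permutation of `1, …, k`). -/
def chargeStd (w : List ℕ) : ℕ :=
  ((List.range w.length).map fun r => chargeIdx w (r+1)).sum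

/-- Find the nearest occurrence of the letter `r` strictly to the left of position `p`,
cyclically. -/
def findLeftCyc (w : List ℕ) (p r : ℕ) : Option ℕ :=
  match ((List.range p).reverse).find? (fun j => w.getD j 0 = r) with
  | some j => some j
  | none => ((List.range w.length).reverse).find? (fun j => w.getD j 0 = r)

/-- Positions of one standard subword, extracted cyclically right-to-left. -/
def extractAux (w : List ℕ) : ℕ → ℕ → ℕ → List ℕ
  | 0, _, _ => []
  | (fuel+1), p, r =>
    match findLeftCyc w p r with
    | none => []
    | some j => j :: extractAux w fuel j (r+1)

def extract (w : List ℕ) : List ℕ :=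
  extractAux w (w.foldr max 0) w.length 1

/-- The standard subword of `w` supported on the positions `ps`. -/
def subwordAt (w : List ℕ) (ps : List ℕ) : List ℕ :=
  (List.insertionSort (· ≤ ·) ps).map (fun j => w.getD j 0)

/-- Remove the positions `ps` from `w`. -/
def removeAt (w : List ℕ) (ps : List ℕ) : List ℕ :=
  (w.zipIdx.filter (fun x => x.2 ∉ ps)).map Prod.fst

def chargeAux : ℕ → List ℕ → ℕ
  | 0, _ => 0
  | (fuel+1), w =>
    let ps := extract w
    if ps.isEmpty then 0
    else chargeStd (subwordAt w ps) + chargeAux fuel (removeAt w ps)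

/-- The Lascoux–Schützenberger charge of a word. -/
def chargeW (w : List ℕ) : ℕ := chargeAux w.length w

/-! ### Tableaux (row representation, entries in `{1, …, n}`) -/

def RowAdj (u v : List ℕ) : Prop :=
  v.length ≤ u.length ∧ ∀ i : ℕ, ∀ x ∈ u[i]?, ∀ y ∈ v[i]?, x < y

def IsSSYTr (t : List (List ℕ)) : Prop :=
  (∀ l ∈ t, l.Pairwise (· ≤ ·) ∧ l ≠ []) ∧ t.Chain' RowAdj

/-- The row reading word (rows bottom to top, each left to right). -/
def readRow (T : List (List ℕ)) : List ℕ := T.reverse.flatten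

/-- The charge of a semistandard tableau. -/
def chargeT (T : List (List ℕ)) : ℕ := chargeW (readRow T)

/-- The coefficient of `q^k` in `K_{λμ}(q) = Σ_T q^{c(T)}`, the sum being over
semistandard tableaux of shape `lam`, entries in `{1,…,n}` and weight `mu`. -/
noncomputable def KFcoeff (n : ℕ) (lam mu : Fin n → ℕ) (k : ℕ) : ℕ :=
  {T : List (List ℕ) | IsSSYTr T ∧
    (∀ i : ℕ, (T.getD i []).length = if h : i < n then lam ⟨i, h⟩ else 0) ∧
    (∀ x ∈ T.flatten, 1 ≤ x ∧ x ≤ n) ∧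
    (∀ i : Fin n, T.flatten.count ((i : ℕ) + 1) = mu i) ∧
    chargeT T = k}.ncard

section Stage1
open List

/-- The descending word `n, n-1, …, 1`. -/
def desc : ℕ → List ℕ
  | 0 => []
  | n+1 => (n+1) :: desc n

lemma desc_length (n : ℕ) : (desc n).length = n := by
  induction n with
  | zero => rfl
  | succ m ih => simp [desc, ih]

lemma indexOf_desc {n k : ℕ} (h1 : 1 ≤ k) (h2 : k ≤ n) : (desc n).idxOf k = n - k := by
  induction n with
  | zero => omega
  | succ m ih =>
    rw [desc, List.idxOf_cons]
    by_cases h : m + 1 = k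
    · simp [h]
    · have hb : ((m+1 : ℕ) == k) = false := by simp [h]
      rw [hb, cond_false, ih (by omega)]
      omega

lemma chargeIdx_desc {n : ℕ} : ∀ r, r ≤ n → KP.chargeIdx (desc n) r = 0 := by
  intro r
  induction r with
  | zero => intro _; rfl
  | succ s ih =>
    intro hs
    match s, ih with
    | 0, _ => rfl
    | (t+1), ih =>
      rw [KP.chargeIdx]
      rw [ih (by omega)]
      rw [indexOf_desc (by omega) (by omega), indexOf_desc (by omega) (by omega)]
      have h : ¬ (n - (t+1) < n - (t+2)) := by omega
      rw [if_neg h]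

lemma chargeStd_desc (n : ℕ) : KP.chargeStd (desc n) = 0 := by
  rw [KP.chargeStd]
  apply List.sum_eq_zero
  intro x hx
  simp only [List.mem_map, List.mem_range, desc_length] at hx
  obtain ⟨r, hr, rfl⟩ := hx
  exact chargeIdx_desc (r+1) (by omega)

/-- Certificate for the behaviour of `extractAux`. -/
def Cert (w : List ℕ) : ℕ → ℕ → List ℕ → Prop
  | _, _, [] => True
  | p, r, q :: Q => q < p ∧ w.getD q 0 = r ∧ (∀ j, q < j → j < p → w.getD j 0 ≠ r) ∧ Cert w q (r+1) Q

lemma find?_rev_range {P : ℕ → Bool} {p q : ℕ} (hq : q < p) (hP : P q = true)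
    (hmax : ∀ j, q < j → j < p → P j = false) : ((List.range p).reverse.find? P) = some q := by
  induction p with
  | zero => omega
  | succ m ih =>
    rw [List.range_succ, List.reverse_append, List.reverse_singleton, List.singleton_append,
      List.find?_cons]
    by_cases hqm : q = m
    · subst hqm; simp [hP]
    · have hPm : P m = false := hmax m (by omega) (by omega)
      simp only [hPm]
      exact ih (by omega) (fun j h1 h2 => hmax j h1 (by omega))

lemma findLeftCyc_eq {w : List ℕ} {p r q : ℕ} (hq : q < p) (hw : w.getD q 0 = r)
    (hmax : ∀ j, q < j → j < p → w.getD j 0 ≠ r) : KP.findLeftCyc w p r = some q := by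
  rw [KP.findLeftCyc]
  have : (List.range p).reverse.find? (fun j => w.getD j 0 = r) = some q := by
    apply find?_rev_range hq
    · simpa [List.getD_eq_getElem?_getD] using hw
    · intro j h1 h2
      simpa [List.getD_eq_getElem?_getD] using hmax j h1 h2
  rw [this]

lemma extractAux_cert {w : List ℕ} : ∀ {Q : List ℕ} {p r : ℕ}, Cert w p r Q →
    KP.extractAux w Q.length p r = Q := by
  intro Q
  induction Q with
  | nil => intro p r _; rfl
  | cons q Q ih =>
    intro p r hc
    obtain ⟨h1, h2, h3, h4⟩ := hc
    rw [List.length_cons, KP.extractAux, findLeftCyc_eq h1 h2 h3]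
    show q :: KP.extractAux w Q.length q (r + 1) = q :: Q
    rw [ih h4]
end Stage1
section Stage2
open List

/-- Positional removal with an offset. -/
def remO : List ℕ → ℕ → List ℕ → List ℕ
  | [], _, _ => []
  | a :: w, o, ps => (if o ∈ ps then [] else [a]) ++ remO w (o+1) ps

lemma enumFrom_filter_remO (ps : List ℕ) :
    ∀ (w : List ℕ) (o : ℕ),
      ((List.zipIdx w o).filter (fun x => x.2 ∉ ps)).map Prod.fst = remO w o ps := by
  intro w
  induction w with
  | nil => intro o; rfl
  | cons a w ih =>
    intro o
    rw [List.zipIdx_cons, List.filter_cons]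
    by_cases h : o ∈ ps
    · rw [if_neg (by simp [h])]
      rw [ih]
      simp [remO, h]
    · rw [if_pos (by simp [h])]
      rw [List.map_cons, ih]
      simp [remO, h]

lemma removeAt_eq_remO (w ps : List ℕ) : KP.removeAt w ps = remO w 0 ps := by
  rw [KP.removeAt, ← enumFrom_filter_remO]

lemma remO_congr {ps ps' : List ℕ} :
    ∀ (w : List ℕ) (o : ℕ), (∀ j, o ≤ j → j < o + w.length → (j ∈ ps ↔ j ∈ ps')) →
      remO w o ps = remO w o ps' := by
  intro w
  induction w with
  | nil => intro o _; rfl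
  | cons a w ih =>
    intro o h
    rw [remO, remO, ih (o+1) (fun j h1 h2 => h j (by omega)
      (by simp only [List.length_cons]; omega))]
    have := h o le_rfl (by simp only [List.length_cons]; omega)
    by_cases ho : o ∈ ps
    · rw [if_pos ho, if_pos (this.mp ho)]
    · rw [if_neg ho, if_neg (fun hx => ho (this.mpr hx))]

lemma remO_id {ps : List ℕ} : ∀ (w : List ℕ) (o : ℕ), (∀ j, o ≤ j → j ∉ ps) →
    remO w o ps = w := by
  intro w
  induction w with
  | nil => intro o _; rfl
  | cons a w ih =>
    intro o h
    rw [remO, if_neg (h o le_rfl), ih (o+1) (fun j hj => h j (by omega))]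
    rfl

lemma remO_append (ps : List ℕ) : ∀ (w₁ w₂ : List ℕ) (o : ℕ),
    remO (w₁ ++ w₂) o ps = remO w₁ o ps ++ remO w₂ (o + w₁.length) ps := by
  intro w₁
  induction w₁ with
  | nil => intro w₂ o; simp [remO]
  | cons a w ih =>
    intro w₂ o
    rw [List.cons_append, remO, remO, ih, List.append_assoc]
    simp only [List.length_cons]
    have : o + 1 + w.length = o + (w.length + 1) := by omega
    rw [this]

lemma remO_single : ∀ (w : List ℕ) (o a : ℕ), remO w o [o + a] = w.eraseIdx a := by
  intro w
  induction w with
  | nil => intro o a; rfl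
  | cons x w ih =>
    intro o a
    cases a with
    | zero =>
      rw [remO, if_pos (by simp)]
      rw [remO_id w (o+1) (by intro j hj; simp only [List.mem_singleton]; omega)]
      rfl
    | succ a =>
      rw [remO, if_neg (by simp only [List.mem_singleton]; omega)]
      have : o + (a + 1) = (o + 1) + a := by omega
      rw [this, ih (o+1) a]
      rfl

/-- Removing the element at the end of the leading run of `c`s. -/
lemma eraseIdx_runEnd {c : ℕ} : ∀ {S : List ℕ}, S.Pairwise (· ≤ ·) → (∀ x ∈ S, c ≤ x) →
    (c :: S).eraseIdx (S.count c) = S := by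
  intro S
  induction S with
  | nil => intro _ _; rfl
  | cons b S ih =>
    intro hs hge
    by_cases hbc : b = c
    · rw [hbc] at hs hge ⊢
      rw [List.count_cons_self, List.eraseIdx_cons_succ]
      rw [ih (List.Pairwise.of_cons hs) (fun x hx => hge x (List.mem_cons_of_mem _ hx))]
    · have hcb : c < b := lt_of_le_of_ne (hge b (List.mem_cons_self)) (Ne.symm hbc)
      have hnc : c ∉ (b :: S) := by
        intro hmem
        rcases List.mem_cons.mp hmem with h | h
        · omega
        · have := (List.pairwise_cons.mp hs).1 c h
          omega
      rw [List.count_eq_zero_of_not_mem hnc, List.eraseIdx_cons_zero]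

/-- Values in the leading run. -/
lemma run_getD_eq {c : ℕ} : ∀ {S : List ℕ}, S.Pairwise (· ≤ ·) → (∀ x ∈ S, c ≤ x) →
    ∀ j, j ≤ S.count c → (c :: S).getD j 0 = c := by
  intro S
  induction S with
  | nil =>
    intro _ _ j hj
    rw [List.count_nil] at hj
    have hj0 : j = 0 := by omega
    subst hj0; rfl
  | cons b S ih =>
    intro hs hge j hj
    cases j with
    | zero => rfl
    | succ j =>
      by_cases hbc : b = c
      · rw [hbc] at hs hge hj ⊢
        rw [List.count_cons_self] at hj
        show (c :: S).getD j 0 = c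
        exact ih (List.Pairwise.of_cons hs) (fun x hx => hge x (List.mem_cons_of_mem _ hx)) j
          (by omega)
      · exfalso
        have hcb : c < b := lt_of_le_of_ne (hge b (List.mem_cons_self)) (Ne.symm hbc)
        have hnc : c ∉ (b :: S) := by
          intro hmem
          rcases List.mem_cons.mp hmem with h | h
          · omega
          · have := (List.pairwise_cons.mp hs).1 c h
            omega
        rw [List.count_eq_zero_of_not_mem hnc] at hj
        omega

/-- Values after the leading run are `> c`. -/
lemma run_getD_gt {c : ℕ} : ∀ {S : List ℕ}, S.Pairwise (· ≤ ·) → (∀ x ∈ S, c ≤ x) →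
    ∀ j, S.count c < j → j < (c :: S).length → c < (c :: S).getD j 0 := by
  intro S
  induction S with
  | nil =>
    intro _ _ j h1 h2
    simp only [List.length_cons, List.length_nil] at h2
    omega
  | cons b S ih =>
    intro hs hge j h1 h2
    by_cases hbc : b = c
    · rw [hbc] at hs hge h1 h2 ⊢
      rw [List.count_cons_self] at h1
      cases j with
      | zero => omega
      | succ j =>
        show c < (c :: S).getD j 0
        exact ih (List.Pairwise.of_cons hs) (fun x hx => hge x (List.mem_cons_of_mem _ hx)) j
          (by omega) (by simp only [List.length_cons] at h2 ⊢; omega)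
    · have hcb : c < b := lt_of_le_of_ne (hge b (List.mem_cons_self)) (Ne.symm hbc)
      have hall : ∀ x ∈ (b :: S), c < x := by
        intro x hx
        rcases List.mem_cons.mp hx with h | h
        · omega
        · have := (List.pairwise_cons.mp hs).1 x h
          omega
      cases j with
      | zero => omega
      | succ j =>
        have hlt : j < (b :: S).length := by
          simp only [List.length_cons] at h2 ⊢; omega
        show c < (b :: S).getD j 0
        rw [List.getD_eq_getElem _ _ hlt]
        exact hall _ (List.getElem_mem hlt)
end Stage2
section Stage3
open List

/-- Structured word: a list of segments for letters `r+|M|-1` down to `r`, each a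
column entry followed by a sorted row tail with entries between the letter and `n`. -/
inductive Seg (n : ℕ) : ℕ → List (List ℕ) → Prop
  | nil (r : ℕ) : Seg n r []
  | cons (r : ℕ) (S : List ℕ) (M : List (List ℕ)) :
      S.Pairwise (· ≤ ·) → (∀ x ∈ S, r + M.length ≤ x ∧ x ≤ n) →
      1 ≤ r + M.length → r + M.length ≤ n →
      Seg n r M → Seg n r (((r + M.length) :: S) :: M)

/-- The extraction certificate positions. -/
def certQ : List (List ℕ) → ℕ → List ℕ
  | [], _ => []
  | L :: M, o => certQ M (o + L.length) ++ [o + L.tail.count (L.headD 0)]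

lemma certQ_length : ∀ (M : List (List ℕ)) (o : ℕ), (certQ M o).length = M.length := by
  intro M
  induction M with
  | nil => intro o; rfl
  | cons L M ih => intro o; simp [certQ, ih]

lemma Seg.flatten_le {n r : ℕ} {M : List (List ℕ)} (h : Seg n r M) :
    ∀ x ∈ M.flatten, x ≤ n := by
  induction h with
  | nil => simp
  | cons S M hs hbd h1 h2 hseg ih =>
    intro x hx
    rw [List.flatten_cons, List.mem_append] at hx
    rcases hx with hx | hx
    · rcases List.mem_cons.mp hx with rfl | hx
      · exact h2
      · exact (hbd x hx).2
    · exact ih x hx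

lemma Seg.flatten_length {n r : ℕ} {M : List (List ℕ)} (h : Seg n r M) :
    M.flatten.length = (M.map List.tail).flatten.length + M.length := by
  induction h with
  | nil => rfl
  | cons S M hs hbd h1 h2 hseg ih =>
    simp only [List.flatten_cons, List.map_cons, List.length_append, List.length_cons,
      List.tail_cons]
    omega

lemma certQ_bounds {n r : ℕ} : ∀ {M : List (List ℕ)}, Seg n r M → ∀ (o : ℕ),
    ∀ x ∈ certQ M o, o ≤ x ∧ x < o + M.flatten.length := by
  intro M h
  induction h with
  | nil => simp [certQ]
  | cons S M hs hbd h1 h2 hseg ih =>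
    intro o x hx
    rw [certQ, List.mem_append] at hx
    simp only [List.tail_cons, List.headD_cons, List.length_cons] at hx
    rcases hx with hx | hx
    · have := ih (o + (S.length + 1)) x hx
      simp only [List.flatten_cons, List.length_append, List.length_cons]
      omega
    · rw [List.mem_singleton] at hx
      subst hx
      have := List.count_le_length (a := r + M.length) (l := S)
      simp only [List.flatten_cons, List.length_append, List.length_cons]
      omega

lemma Cert.append {w : List ℕ} : ∀ {Q₁ Q₂ : List ℕ} {p r : ℕ},
    Cert w p r Q₁ → Cert w (Q₁.getLastD p) (r + Q₁.length) Q₂ → Cert w p r (Q₁ ++ Q₂) := by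
  intro Q₁
  induction Q₁ with
  | nil =>
    intro Q₂ p r _ h2
    simpa using h2
  | cons q Q ih =>
    intro Q₂ p r h1 h2
    obtain ⟨a, b, c, d⟩ := h1
    refine ⟨a, b, c, ih d ?_⟩
    rw [List.getLastD_cons] at h2
    have he : r + (q :: Q).length = r + 1 + Q.length := by simp; omega
    rw [he] at h2
    exact h2

lemma getD_append_add (u v : List ℕ) (t : ℕ) : (u ++ v).getD (u.length + t) 0 = v.getD t 0 := by
  rw [List.getD_eq_getElem?_getD, List.getD_eq_getElem?_getD,
    List.getElem?_append_right (by omega)]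
  have h : u.length + t - u.length = t := by omega
  rw [h]

lemma getD_append_add' {u : List ℕ} (v : List ℕ) {o : ℕ} (h : u.length = o) (t : ℕ) :
    (u ++ v).getD (o + t) 0 = v.getD t 0 := by
  subst h
  exact getD_append_add u v t

lemma getD_append_lt (u v : List ℕ) {t : ℕ} (h : t < u.length) :
    (u ++ v).getD t 0 = u.getD t 0 := by
  rw [List.getD_eq_getElem?_getD, List.getD_eq_getElem?_getD, List.getElem?_append_left h]

lemma getLastD_concat' (l : List ℕ) (a d : ℕ) : (l ++ [a]).getLastD d = a := by
  rw [List.getLastD_eq_getLast?, List.getLast?_concat]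
  rfl

/-- The main certificate construction. -/
lemma cert_main {n : ℕ} : ∀ {r : ℕ} {M : List (List ℕ)}, Seg n r M → ∀ (u : List ℕ),
    Cert (u ++ M.flatten) (u ++ M.flatten).length r (certQ M u.length) := by
  intro r M h
  induction h with
  | nil => intro u; trivial
  | cons S M hs hbd h1 h2 hseg ih =>
    intro u
    have hSge : ∀ x ∈ S, r + M.length ≤ x := fun x hx => (hbd x hx).1
    have ha : S.count (r + M.length) ≤ S.length := List.count_le_length
    have hunf : certQ (((r + M.length) :: S) :: M) u.length =
        certQ M (u.length + (S.length + 1)) ++ [u.length + S.count (r + M.length)] := by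
      simp [certQ]
    rw [hunf]
    have hw : u ++ (((r + M.length) :: S) :: M).flatten =
        (u ++ ((r + M.length) :: S)) ++ M.flatten := by
      rw [List.flatten_cons, List.append_assoc]
    rw [hw]
    have ih' := ih (u ++ ((r + M.length) :: S))
    have hlen' : (u ++ ((r + M.length) :: S)).length = u.length + (S.length + 1) := by
      simp
    rw [hlen'] at ih'
    apply Cert.append ih'
    rw [certQ_length]
    have hvalue : ((u ++ ((r + M.length) :: S)) ++ M.flatten).getD
        (u.length + S.count (r + M.length)) 0 = r + M.length := by
      rw [List.append_assoc, getD_append_add, getD_append_lt _ _ (by simp; omega)]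
      exact run_getD_eq hs hSge _ le_rfl
    have hgapL : ∀ j, u.length + S.count (r + M.length) < j → j < u.length + (S.length + 1) →
        ((u ++ ((r + M.length) :: S)) ++ M.flatten).getD j 0 ≠ r + M.length := by
      intro j hj1 hj2
      have hj3 : j = u.length + (j - u.length) := by omega
      rw [List.append_assoc, hj3, getD_append_add, getD_append_lt _ _ (by simp; omega)]
      have := run_getD_gt hs hSge (j - u.length) (by omega) (by simp; omega)
      omega
    cases hseg with
    | nil =>
      refine ⟨?_, hvalue, ?_, trivial⟩
      · simp only [certQ, List.getLastD, List.flatten_nil, List.append_nil, List.length_append,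
          List.length_cons]
        omega
      · intro j hj1 hj2
        simp only [certQ, List.getLastD, List.flatten_nil, List.append_nil, List.length_append,
          List.length_cons] at hj2
        exact hgapL j hj1 (by omega)
    | cons S' M' hs' hbd' h1' h2' hseg' =>
      have hS'ge : ∀ x ∈ S', r + M'.length ≤ x := fun x hx => (hbd' x hx).1
      have ha' : S'.count (r + M'.length) ≤ S'.length := List.count_le_length
      have hunf2 : certQ (((r + M'.length) :: S') :: M') (u.length + (S.length + 1)) =
          certQ M' (u.length + (S.length + 1) + (S'.length + 1)) ++
            [u.length + (S.length + 1) + S'.count (r + M'.length)] := by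
        simp [certQ]
      rw [hunf2, getLastD_concat']
      refine ⟨by omega, hvalue, ?_, trivial⟩
      intro j hj1 hj2
      by_cases hjL : j < u.length + (S.length + 1)
      · exact hgapL j hj1 hjL
      · -- j lies in the leading run of the next segment, whose letter is one less
        have hj3 : j = u.length + (S.length + 1) + (j - (u.length + (S.length + 1))) := by omega
        rw [hj3, getD_append_add' _ hlen' _]
        rw [List.flatten_cons, getD_append_lt _ _ (by simp only [List.length_cons]; omega)]
        have := run_getD_eq hs' hS'ge (j - (u.length + (S.length + 1))) (by omega)
        simp only [List.length_cons] at *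
        omega

/-- Values read along a certificate. -/
lemma cert_values {w : List ℕ} : ∀ {Q : List ℕ} {p r : ℕ}, Cert w p r Q →
    Q.map (fun q => w.getD q 0) = List.range' r Q.length := by
  intro Q
  induction Q with
  | nil => intro p r _; rfl
  | cons q Q ih =>
    intro p r h
    obtain ⟨a, b, c, d⟩ := h
    rw [List.map_cons, ih d, b, List.length_cons, List.range'_succ]

lemma cert_lt_p {w : List ℕ} : ∀ {Q : List ℕ} {p r : ℕ}, Cert w p r Q → ∀ x ∈ Q, x < p := by
  intro Q
  induction Q with
  | nil => intro p r _ x hx; simp at hx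
  | cons q Q ih =>
    intro p r h x hx
    obtain ⟨a, b, c, d⟩ := h
    rcases List.mem_cons.mp hx with rfl | hx
    · exact a
    · exact lt_trans (ih d x hx) a

lemma cert_sorted_gt {w : List ℕ} : ∀ {Q : List ℕ} {p r : ℕ}, Cert w p r Q →
    Q.Pairwise (· > ·) := by
  intro Q
  induction Q with
  | nil => intro p r _; exact List.Pairwise.nil
  | cons q Q ih =>
    intro p r h
    obtain ⟨a, b, c, d⟩ := h
    rw [List.pairwise_cons]
    exact ⟨fun x hx => cert_lt_p d x hx, ih d⟩

lemma subwordAt_cert {w : List ℕ} {Q : List ℕ} {p r : ℕ} (h : Cert w p r Q) :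
    KP.subwordAt w Q = (List.range' r Q.length).reverse := by
  rw [KP.subwordAt]
  have hsort : List.insertionSort (· ≤ ·) Q = Q.reverse := by
    apply List.Perm.eq_of_pairwise' (List.pairwise_insertionSort _ _) ?_
      ((List.perm_insertionSort _ _).trans (List.reverse_perm Q).symm)
    rw [List.pairwise_reverse]
    exact (cert_sorted_gt h).imp (fun {a b} hab => le_of_lt hab)
  rw [hsort, List.map_reverse, cert_values h]

lemma desc_eq_range' (n : ℕ) : desc n = (List.range' 1 n).reverse := by
  induction n with
  | zero => rfl
  | succ m ih =>
    rw [desc, List.range'_1_concat, List.reverse_append, List.reverse_singleton,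
      List.singleton_append, ← ih]
    congr 1
    omega

/-- foldr max computations -/
lemma foldr_max_le {n : ℕ} : ∀ {w : List ℕ}, (∀ x ∈ w, x ≤ n) → w.foldr max 0 ≤ n := by
  intro w
  induction w with
  | nil => intro _; simp
  | cons a w ih =>
    intro h
    rw [List.foldr_cons]
    exact max_le (h a (List.mem_cons_self)) (ih fun x hx => h x (List.mem_cons_of_mem _ hx))

lemma le_foldr_max : ∀ {w : List ℕ} {x : ℕ}, x ∈ w → x ≤ w.foldr max 0 := by
  intro w
  induction w with
  | nil => intro x hx; simp at hx
  | cons a w ih =>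
    intro x hx
    rw [List.foldr_cons]
    rcases List.mem_cons.mp hx with rfl | hx
    · exact le_max_left _ _
    · exact le_trans (ih hx) (le_max_right _ _)

lemma foldr_max_eq {n : ℕ} {w : List ℕ} (hle : ∀ x ∈ w, x ≤ n) (hmem : n ∈ w) :
    w.foldr max 0 = n :=
  le_antisymm (foldr_max_le hle) (le_foldr_max hmem)

/-- The extraction from a structured word. -/
lemma extract_eq {n : ℕ} {M : List (List ℕ)} (h : Seg n 1 M) (hlen : M.length = n)
    (hn : 1 ≤ n) : KP.extract M.flatten = certQ M 0 := by
  have hmem : n ∈ M.flatten := by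
    cases h with
    | nil => rw [← hlen] at hn; simp at hn
    | cons S M' hs hbd h1 h2 hseg =>
      rw [List.flatten_cons, List.mem_append]
      left
      have : 1 + M'.length = n := by
        rw [← hlen]; simp only [List.length_cons]; omega
      rw [this]
      exact List.mem_cons_self
  have hmax : M.flatten.foldr max 0 = n := foldr_max_eq h.flatten_le hmem
  rw [KP.extract, hmax]
  have hc := cert_main h []
  simp only [List.nil_append, List.length_nil] at hc
  have : n = (certQ M 0).length := by rw [certQ_length, hlen]
  rw [this]
  exact extractAux_cert hc

/-- Removing the certificate positions strips the first column. -/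
lemma remO_certQ {n : ℕ} : ∀ {r : ℕ} {M : List (List ℕ)}, Seg n r M → ∀ (o : ℕ),
    remO M.flatten o (certQ M o) = (M.map List.tail).flatten := by
  intro r M h
  induction h with
  | nil => intro o; rfl
  | cons S M hs hbd h1 h2 hseg ih =>
    intro o
    have hSge : ∀ x ∈ S, r + M.length ≤ x := fun x hx => (hbd x hx).1
    have ha : S.count (r + M.length) ≤ S.length := List.count_le_length
    have hbnd := certQ_bounds hseg (o + (S.length + 1))
    have hunf : certQ (((r + M.length) :: S) :: M) o =
        certQ M (o + (S.length + 1)) ++ [o + S.count (r + M.length)] := by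
      simp [certQ]
    rw [List.flatten_cons, remO_append, hunf]
    have e1 : remO ((r + M.length) :: S) o
        (certQ M (o + (S.length + 1)) ++ [o + S.count (r + M.length)]) = S := by
      rw [remO_congr ((r + M.length) :: S) o
        (ps' := [o + S.count (r + M.length)]) ?_]
      · rw [remO_single]
        exact eraseIdx_runEnd hs hSge
      · intro j hj1 hj2
        simp only [List.length_cons] at hj2
        rw [List.mem_append]
        constructor
        · rintro (hj | hj)
          · exact absurd (hbnd j hj).1 (by omega)
          · exact hj
        · intro hj
          exact Or.inr hj
    have e2 : remO M.flatten (o + ((r + M.length) :: S).length)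
        (certQ M (o + (S.length + 1)) ++ [o + S.count (r + M.length)]) =
        (M.map List.tail).flatten := by
      simp only [List.length_cons]
      rw [remO_congr M.flatten (o + (S.length + 1))
        (ps' := certQ M (o + (S.length + 1))) ?_]
      · exact ih _
      · intro j hj1 hj2
        rw [List.mem_append]
        constructor
        · rintro (hj | hj)
          · exact hj
          · rw [List.mem_singleton] at hj
            omega
        · intro hj
          exact Or.inl hj
    rw [e1, e2]
    simp

/-- chargeAux with zero-length word. -/
lemma chargeAux_nil : ∀ f, KP.chargeAux f [] = 0 := by
  intro f
  cases f with
  | zero => rfl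
  | succ f => rfl

lemma chargeAux_succ (f : ℕ) (w : List ℕ) : KP.chargeAux (f+1) w =
    if (KP.extract w).isEmpty then 0
    else KP.chargeStd (KP.subwordAt w (KP.extract w)) +
      KP.chargeAux f (KP.removeAt w (KP.extract w)) := rfl

lemma findLeftCyc_some_lt {w : List ℕ} {p r j : ℕ} (h : KP.findLeftCyc w p r = some j) :
    j < w.length ∨ j < p := by
  rw [KP.findLeftCyc] at h
  cases hfind : (List.range p).reverse.find? (fun j => decide (w.getD j 0 = r)) with
  | some j' =>
    rw [hfind] at h
    have : j' = j := by injection h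
    subst this
    right
    have := List.mem_of_find?_eq_some hfind
    rw [List.mem_reverse, List.mem_range] at this
    exact this
  | none =>
    rw [hfind] at h
    left
    have := List.mem_of_find?_eq_some h
    rw [List.mem_reverse, List.mem_range] at this
    exact this

lemma extract_head_lt {w : List ℕ} {j : ℕ} {Q : List ℕ} (h : KP.extract w = j :: Q) :
    j < w.length := by
  rw [KP.extract] at h
  cases hf : w.foldr max 0 with
  | zero => rw [hf] at h; exact absurd h (by simp [KP.extractAux])
  | succ m =>
    rw [hf, KP.extractAux] at h
    cases hfl : KP.findLeftCyc w w.length 1 with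
    | none => rw [hfl] at h; simp at h
    | some j' =>
      rw [hfl] at h
      have hj : j' = j := by
        have := (List.cons.injEq _ _ _ _).mp h
        exact this.1
      subst hj
      rcases findLeftCyc_some_lt hfl with h' | h'
      · exact h'
      · exact h'

lemma removeAt_length_lt {w ps : List ℕ} (h : ∃ j ∈ ps, j < w.length) :
    (KP.removeAt w ps).length < w.length := by
  obtain ⟨j, hj, hjw⟩ := h
  rw [KP.removeAt, List.length_map]
  have hlen : w.zipIdx.length = w.length := List.length_zipIdx
  conv_rhs => rw [← hlen]
  rw [List.length_filter_lt_length_iff_exists]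
  refine ⟨(w[j]'hjw, j), ?_, ?_⟩
  · rw [List.mem_zipIdx_iff_getElem?]
    exact List.getElem?_eq_getElem hjw
  · simp [hj]

lemma chargeAux_congr : ∀ (N : ℕ) (w : List ℕ), w.length ≤ N → ∀ f g, w.length ≤ f →
    w.length ≤ g → KP.chargeAux f w = KP.chargeAux g w := by
  intro N
  induction N with
  | zero =>
    intro w hw f g _ _
    have : w = [] := List.length_eq_zero_iff.mp (by omega)
    subst this
    rw [chargeAux_nil, chargeAux_nil]
  | succ N ih =>
    intro w hw f g hf hg
    cases f with
    | zero =>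
      have : w = [] := List.length_eq_zero_iff.mp (by omega)
      subst this
      rw [chargeAux_nil, chargeAux_nil]
    | succ f =>
      cases g with
      | zero =>
        have : w = [] := List.length_eq_zero_iff.mp (by omega)
        subst this
        rw [chargeAux_nil, chargeAux_nil]
      | succ g =>
        rw [chargeAux_succ, chargeAux_succ]
        by_cases hE : (KP.extract w).isEmpty
        · rw [if_pos hE, if_pos hE]
        · rw [if_neg hE, if_neg hE]
          congr 1
          obtain ⟨j, Q, hjQ⟩ : ∃ j Q, KP.extract w = j :: Q := by
            cases hx : KP.extract w with
            | nil => rw [hx] at hE; simp at hE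
            | cons j Q => exact ⟨j, Q, rfl⟩
          have hjlt := extract_head_lt hjQ
          have hlt : (KP.removeAt w (KP.extract w)).length < w.length :=
            removeAt_length_lt ⟨j, by rw [hjQ]; exact List.mem_cons_self, hjlt⟩
          exact ih _ (by omega) f g (by omega) (by omega)

/-- Main word-level lemma: the charge is unchanged by stripping the first column. -/
theorem chargeW_seg {n : ℕ} {M : List (List ℕ)} (h : Seg n 1 M) (hlen : M.length = n)
    (hn : 1 ≤ n) : KP.chargeW M.flatten = KP.chargeW (M.map List.tail).flatten := by
  have hext : KP.extract M.flatten = certQ M 0 := extract_eq h hlen hn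
  have hQlen : (certQ M 0).length = n := by rw [certQ_length, hlen]
  have hflen : M.flatten.length = (M.map List.tail).flatten.length + n := by
    rw [h.flatten_length, hlen]
  rw [KP.chargeW, KP.chargeW]
  obtain ⟨m, hm⟩ : ∃ m, M.flatten.length = m + 1 := ⟨M.flatten.length - 1, by omega⟩
  rw [hm, chargeAux_succ, hext]
  have hne : ¬ ((certQ M 0).isEmpty = true) := by
    rw [List.isEmpty_iff]
    intro hcontra
    rw [hcontra] at hQlen
    simp at hQlen
    omega
  rw [if_neg hne]
  have hc := cert_main h []
  simp only [List.nil_append, List.length_nil] at hc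
  rw [subwordAt_cert hc, hQlen, ← desc_eq_range', chargeStd_desc, Nat.zero_add]
  rw [removeAt_eq_remO, remO_certQ h 0]
  exact chargeAux_congr m _ (by omega) m _ (by omega) (by omega)
end Stage3
section Stage4
open List

/-! ### Generic list lemmas -/

lemma getD_map_tail (l : List (List ℕ)) (i : ℕ) :
    (l.map List.tail).getD i [] = (l.getD i []).tail := by
  rw [List.getD_eq_getElem?_getD, List.getD_eq_getElem?_getD, List.getElem?_map]
  cases l[i]? <;> rfl

lemma filter_ne_nil_getD : ∀ (l : List (List ℕ)),
    (∀ i j, i ≤ j → l.getD i [] = [] → l.getD j [] = []) →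
    ∀ i, (l.filter (fun x => !x.isEmpty)).getD i [] = l.getD i [] := by
  intro l
  induction l with
  | nil => intro _ i; rfl
  | cons x t ih =>
    intro hmono i
    by_cases hx : x = []
    · subst hx
      have hall : ∀ j, (([] : List ℕ) :: t).getD j [] = [] := fun j =>
        hmono 0 j (Nat.zero_le j) rfl
      have hfilt : ((([] : List ℕ) :: t).filter (fun x => !x.isEmpty)) = [] := by
        rw [List.filter_eq_nil_iff]
        intro a ha
        obtain ⟨m, hm, hma⟩ := List.mem_iff_getElem.mp ha
        have h0 := hall m
        rw [List.getD_eq_getElem _ _ hm, hma] at h0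
        simp [h0]
      rw [hfilt, hall i]
      rfl
    · have hxne : (!x.isEmpty) = true := by
        simp [List.isEmpty_iff, hx]
      rw [List.filter_cons, if_pos hxne]
      cases i with
      | zero => rfl
      | succ i =>
        rw [List.getD_cons_succ, List.getD_cons_succ]
        exact ih (fun i j hij h => hmono (i+1) (j+1) (by omega) h) i

lemma flatten_filter_ne_nil : ∀ (l : List (List ℕ)),
    (l.filter (fun x => !x.isEmpty)).flatten = l.flatten := by
  intro l
  induction l with
  | nil => rfl
  | cons x t ih =>
    by_cases hx : x = []
    · subst hx
      rw [List.filter_cons, if_neg (by simp)]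
      rw [ih]
      simp
    · rw [List.filter_cons, if_pos (by simp [List.isEmpty_iff, hx])]
      rw [List.flatten_cons, List.flatten_cons, ih]

lemma count_flatten_head_tail : ∀ (l : List (List ℕ)), (∀ L ∈ l, L ≠ []) → ∀ c,
    l.flatten.count c =
      (l.map (fun L => L.headD 0)).count c + (l.map List.tail).flatten.count c := by
  intro l
  induction l with
  | nil => intro _ c; rfl
  | cons L t ih =>
    intro hne c
    have hL : L.headD 0 :: L.tail = L := by
      cases L with
      | nil => exact absurd rfl (hne [] (List.mem_cons_self))
      | cons a l => rfl
    rw [List.flatten_cons, List.map_cons, List.map_cons, List.flatten_cons,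
      List.count_append, List.count_append, List.count_cons,
      ih (fun L hL => hne L (List.mem_cons_of_mem _ hL)) c]
    conv_lhs => rw [← hL]
    rw [List.count_cons]
    omega

lemma count_range'_1 (n c : ℕ) :
    (List.range' 1 n).count c = if 1 ≤ c ∧ c ≤ n then 1 else 0 := by
  by_cases h : 1 ≤ c ∧ c ≤ n
  · rw [if_pos h]
    exact List.count_eq_one_of_mem (List.nodup_range' (s := 1) (n := n))
      (List.mem_range'_1.mpr ⟨h.1, by omega⟩)
  · rw [if_neg h]
    apply List.count_eq_zero_of_not_mem
    intro hc
    rw [List.mem_range'_1] at hc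
    omega

lemma map_headD_eq_range' {n : ℕ} {l : List (List ℕ)} (hlen : l.length = n)
    (hhead : ∀ i, i < n → (l.getD i []).headD 0 = i + 1) :
    l.map (fun L => L.headD 0) = List.range' 1 n := by
  apply List.ext_getElem
  · simp [hlen]
  · intro i h1 h2
    rw [List.getElem_map, List.getElem_range']
    rw [List.length_map, hlen] at h1
    have := hhead i h1
    rw [List.getD_eq_getElem _ _ (by omega)] at this
    rw [this]
    omega

lemma ofFn_getD_append {n : ℕ} {l : List (List ℕ)} (h : l.length ≤ n) :
    (List.ofFn fun i : Fin n => l.getD (i : ℕ) []) = l ++ List.replicate (n - l.length) [] := by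
  apply List.ext_getElem
  · simp only [List.length_ofFn, List.length_append, List.length_replicate]
    omega
  · intro i h1 h2
    rw [List.getElem_ofFn]
    show l.getD i [] = (l ++ List.replicate (n - l.length) [])[i]
    by_cases hi : i < l.length
    · rw [List.getElem_append_left hi]
      exact List.getD_eq_getElem l [] hi
    · rw [List.getElem_append_right (by omega), List.getElem_replicate]
      exact List.getD_eq_default _ _ (by omega)

lemma flatten_replicate_nil : ∀ (k : ℕ), (List.replicate k ([] : List ℕ)).flatten = [] := by
  intro k
  induction k with
  | zero => rfl
  | succ k ih => rw [List.replicate_succ, List.flatten_cons, ih]; rfl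

lemma ofFn_getD_flatten (n : ℕ) (l : List (List ℕ)) (h : l.length ≤ n) :
    (List.ofFn fun i : Fin n => l.getD (i : ℕ) []).flatten = l.flatten := by
  rw [ofFn_getD_append h, List.flatten_append, flatten_replicate_nil, List.append_nil]

lemma ofFn_getD_flatten_rev (n : ℕ) (l : List (List ℕ)) (h : l.length ≤ n) :
    ((List.ofFn fun i : Fin n => l.getD (i : ℕ) []).reverse).flatten = l.reverse.flatten := by
  rw [ofFn_getD_append h, List.reverse_append, List.flatten_append, List.reverse_replicate,
    flatten_replicate_nil]
  rfl

lemma ofFn_getD_filter (n : ℕ) (l : List (List ℕ)) (h : l.length ≤ n)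
    (hne : ∀ L ∈ l, L ≠ []) :
    (List.ofFn fun i : Fin n => l.getD (i : ℕ) []).filter (fun x => !x.isEmpty) = l := by
  rw [ofFn_getD_append h, List.filter_append]
  have h1 : l.filter (fun x => !x.isEmpty) = l := by
    rw [List.filter_eq_self]
    intro a ha
    simp [List.isEmpty_iff, hne a ha]
  have h2 : (List.replicate (n - l.length) ([] : List ℕ)).filter (fun x => !x.isEmpty) = [] := by
    rw [List.filter_eq_nil_iff]
    intro a ha
    rw [List.eq_of_mem_replicate ha]
    simp
  rw [h1, h2, List.append_nil]

lemma ofFn_getD_self {n : ℕ} {l : List (List ℕ)} (hlen : l.length = n) :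
    (List.ofFn fun i : Fin n => l.getD (i : ℕ) []) = l := by
  apply List.ext_getElem
  · simp [hlen]
  · intro i h1 h2
    rw [List.getElem_ofFn]
    show l.getD i [] = l[i]
    exact List.getD_eq_getElem l [] h2

/-! ### RowAdj lemmas -/

lemma rowAdj_trans {u v w : List ℕ} (h1 : KP.RowAdj u v) (h2 : KP.RowAdj v w) :
    KP.RowAdj u w := by
  obtain ⟨ha, hb⟩ := h1
  obtain ⟨hc, hd⟩ := h2
  refine ⟨le_trans hc ha, ?_⟩
  intro i x hx z hz
  have hiw : i < w.length := by
    obtain ⟨h, _⟩ := List.getElem?_eq_some_iff.mp hz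
    exact h
  have hiv : i < v.length := lt_of_lt_of_le hiw hc
  have hy : v[i]? = some v[i] := List.getElem?_eq_getElem hiv
  exact lt_trans (hb i x hx _ hy) (hd i _ hy z hz)

instance : IsTrans (List ℕ) KP.RowAdj := ⟨fun _ _ _ => rowAdj_trans⟩

lemma rowAdj_tail {u v : List ℕ} (h : KP.RowAdj u v) : KP.RowAdj u.tail v.tail := by
  obtain ⟨ha, hb⟩ := h
  refine ⟨by rw [List.length_tail, List.length_tail]; omega, ?_⟩
  intro i x hx y hy
  rw [List.getElem?_tail] at hx hy
  exact hb (i+1) x hx y hy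

/-! ### Row structure of a semistandard tableau -/

lemma ssytr_length_eq {n : ℕ} {T : List (List ℕ)} (hrows : ∀ L ∈ T, L ≠ [])
    (hne : ∀ i, i < n → (T.getD i []).length ≠ 0)
    (hz : ∀ i, n ≤ i → (T.getD i []).length = 0) : T.length = n := by
  rcases lt_trichotomy T.length n with h | h | h
  · exfalso
    apply hne T.length h
    rw [List.getD_eq_default _ _ le_rfl]
    rfl
  · exact h
  · exfalso
    have h0 := hz n (le_refl n)
    rw [List.getD_eq_getElem _ _ h] at h0
    exact hrows _ (List.getElem_mem h) (List.length_eq_zero_iff.mp h0)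

lemma headD_mem {l : List ℕ} (h : l ≠ []) : l.headD 0 ∈ l := by
  cases l with
  | nil => exact absurd rfl h
  | cons a t => exact List.mem_cons_self

lemma head_get? {l : List ℕ} (h : l ≠ []) : l[0]? = some (l.headD 0) := by
  cases l with
  | nil => exact absurd rfl h
  | cons a t => rfl

lemma row_entries_ge {T : List (List ℕ)} (hS : KP.IsSSYTr T)
    (hb : ∀ x ∈ T.flatten, 1 ≤ x) :
    ∀ i, ∀ x ∈ T.getD i [], i + 1 ≤ x := by
  intro i
  induction i with
  | zero =>
    intro x hx
    apply hb
    rw [List.mem_flatten]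
    have hne : T.getD 0 [] ≠ [] := by
      intro h0
      rw [h0] at hx
      simp at hx
    have hlt : 0 < T.length := by
      by_contra h
      exact hne (List.getD_eq_default _ _ (by omega))
    exact ⟨T.getD 0 [], by rw [List.getD_eq_getElem _ _ hlt]; exact List.getElem_mem hlt, hx⟩
  | succ i ih =>
    intro x hx
    have hne : T.getD (i+1) [] ≠ [] := by
      intro h0
      rw [h0] at hx
      simp at hx
    have hlt : i + 1 < T.length := by
      by_contra h
      exact hne (List.getD_eq_default _ _ (by omega))
    obtain ⟨j, hj, hjx⟩ := List.mem_iff_getElem.mp hx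
    have hchain := hS.2
    change List.IsChain KP.RowAdj T at hchain
    rw [List.isChain_iff_getElem] at hchain
    have hadj0 := hchain i (by omega)
    have hadj : KP.RowAdj (T.getD i []) (T.getD (i+1) []) := by
      have e1 : T.getD i [] = T.get ⟨i, Nat.lt_of_succ_lt hlt⟩ := by
        rw [List.getD_eq_getElem?_getD, List.getElem?_eq_getElem (Nat.lt_of_succ_lt hlt)]
        rfl
      have e2 : T.getD (i+1) [] = T.get ⟨i+1, hlt⟩ := by
        rw [List.getD_eq_getElem?_getD, List.getElem?_eq_getElem hlt]
        rfl
      rw [e1, e2]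
      exact hadj0
    have hjlen : j < (T.getD i []).length := by
      have := hadj.1
      omega
    have hy : (T.getD i [])[j]? = some ((T.getD i [])[j]) :=
      List.getElem?_eq_getElem hjlen
    have hxmem : (T.getD (i+1) [])[j]? = some x := by
      rw [List.getElem?_eq_getElem hj, hjx]
    have hlt2 := hadj.2 j _ hy x hxmem
    have hge : i + 1 ≤ (T.getD i [])[j] := ih _ (List.getElem_mem hjlen)
    omega

lemma heads_forced {n : ℕ} {T : List (List ℕ)} (hS : KP.IsSSYTr T) (hTlen : T.length = n)
    (hne : ∀ i, i < n → T.getD i [] ≠ [])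
    (hb : ∀ x ∈ T.flatten, 1 ≤ x ∧ x ≤ n) :
    ∀ i, i < n → (T.getD i []).headD 0 = i + 1 := by
  have hmem : ∀ i, i < n → (T.getD i []).headD 0 ∈ T.flatten := by
    intro i hi
    rw [List.mem_flatten]
    refine ⟨T.getD i [], ?_, headD_mem (hne i hi)⟩
    rw [List.getD_eq_getElem _ _ (by omega)]
    exact List.getElem_mem (by omega)
  have hmono : ∀ i, i + 1 < n → (T.getD i []).headD 0 < (T.getD (i+1) []).headD 0 := by
    intro i hi
    have hchain := hS.2
    change List.IsChain KP.RowAdj T at hchain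
    rw [List.isChain_iff_getElem] at hchain
    have hadj0 := hchain i (by omega)
    have hadj : KP.RowAdj (T.getD i []) (T.getD (i+1) []) := by
      have e1 : T.getD i [] = T.get ⟨i, by omega⟩ := by
        rw [List.getD_eq_getElem?_getD, List.getElem?_eq_getElem (show i < T.length by omega)]
        rfl
      have e2 : T.getD (i+1) [] = T.get ⟨i+1, by omega⟩ := by
        rw [List.getD_eq_getElem?_getD, List.getElem?_eq_getElem (show i+1 < T.length by omega)]
        rfl
      rw [e1, e2]
      exact hadj0
    exact hadj.2 0 _ (head_get? (hne i (by omega))) _ (head_get? (hne (i+1) (by omega)))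
  have hlow : ∀ i, i < n → i + 1 ≤ (T.getD i []).headD 0 := by
    intro i
    induction i with
    | zero => intro h0; exact (hb _ (hmem 0 h0)).1
    | succ i ih =>
      intro hi
      have h1 := hmono i hi
      have h2 := ih (by omega)
      omega
  have hstep : ∀ i j, i + j < n →
      (T.getD i []).headD 0 + j ≤ (T.getD (i+j) []).headD 0 := by
    intro i j
    induction j with
    | zero => intro _; simp
    | succ j ih =>
      intro hj
      have h1 := ih (by omega)
      have h2 := hmono (i+j) (by omega)
      have : i + (j+1) = (i + j) + 1 := by omega
      rw [this]
      omega
  intro i hi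
  have h1 := hlow i hi
  have h2 := hstep i (n - 1 - i) (by omega)
  rw [show i + (n - 1 - i) = n - 1 from by omega] at h2
  have h3 := (hb _ (hmem (n-1) (by omega))).2
  omega
end Stage4
section Stage5
open List

def rmCol (T : List (List ℕ)) : List (List ℕ) :=
  (T.map List.tail).filter (fun l => !l.isEmpty)

def adCol (n : ℕ) (T : List (List ℕ)) : List (List ℕ) :=
  List.ofFn (fun i : Fin n => ((i : ℕ) + 1) :: T.getD (i : ℕ) [])

lemma headD_cons_tail {l : List ℕ} (h : l ≠ []) : l.headD 0 :: l.tail = l := by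
  cases l with
  | nil => exact absurd rfl h
  | cons a t => rfl

lemma chain'_getD {T : List (List ℕ)} (h : List.Chain' KP.RowAdj T) {i : ℕ}
    (hlt : i + 1 < T.length) : KP.RowAdj (T.getD i []) (T.getD (i+1) []) := by
  change List.IsChain KP.RowAdj T at h
  rw [List.isChain_iff_getElem] at h
  have hadj0 := h i (by omega)
  have e1 : T.getD i [] = T.get ⟨i, Nat.lt_of_succ_lt hlt⟩ := by
    rw [List.getD_eq_getElem?_getD, List.getElem?_eq_getElem (Nat.lt_of_succ_lt hlt)]
    rfl
  have e2 : T.getD (i+1) [] = T.get ⟨i+1, hlt⟩ := by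
    rw [List.getD_eq_getElem?_getD, List.getElem?_eq_getElem hlt]
    rfl
  rw [e1, e2]
  exact hadj0

lemma getD_mem_self {T : List (List ℕ)} {i : ℕ} (h : i < T.length) : T.getD i [] ∈ T := by
  rw [List.getD_eq_getElem _ _ h]
  exact List.getElem_mem h

lemma seg_of_rows {n : ℕ} : ∀ (T : List (List ℕ)), T.length ≤ n →
    (∀ i, i < T.length → ∃ S, T.getD i [] = (i + 1) :: S ∧ S.Pairwise (· ≤ ·) ∧
       ∀ x ∈ S, i + 1 ≤ x ∧ x ≤ n) →
    Seg n 1 T.reverse := by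
  intro T
  induction T using List.reverseRecOn with
  | nil => intro _ _; exact Seg.nil 1
  | append_singleton T R ih =>
    intro hlen hrow
    rw [List.reverse_append, List.reverse_singleton, List.singleton_append]
    have hTlen : (T ++ [R]).length = T.length + 1 := by simp
    obtain ⟨S, hR, hs, hbd⟩ := hrow T.length (by omega)
    have hgetD : (T ++ [R]).getD T.length [] = R := by
      rw [List.getD_eq_getElem?_getD, List.getElem?_append_right le_rfl]
      simp
    rw [hgetD] at hR
    have hseg : Seg n 1 T.reverse := by
      apply ih (by omega)
      intro i hi
      obtain ⟨S', h1, h2, h3⟩ := hrow i (by omega)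
      refine ⟨S', ?_, h2, h3⟩
      rw [← h1, List.getD_eq_getElem?_getD, List.getD_eq_getElem?_getD,
        List.getElem?_append_left hi]
    have hb2 : ∀ x ∈ S, 1 + T.reverse.length ≤ x ∧ x ≤ n := by
      intro x hx
      have := hbd x hx
      rw [List.length_reverse]
      omega
    have h12 : 1 ≤ 1 + T.reverse.length := by omega
    have h22 : 1 + T.reverse.length ≤ n := by rw [List.length_reverse]; omega
    have hcons := Seg.cons 1 S T.reverse hs hb2 h12 h22 hseg
    rw [hR]
    have he : 1 + T.reverse.length = T.length + 1 := by rw [List.length_reverse]; omega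
    rw [he] at hcons
    exact hcons

lemma chargeT_eq_of_rows {n : ℕ} {T : List (List ℕ)} (hn : 1 ≤ n) (hTlen : T.length = n)
    (hrow : ∀ i, i < n → ∃ S, T.getD i [] = (i + 1) :: S ∧ S.Pairwise (· ≤ ·) ∧
       ∀ x ∈ S, i + 1 ≤ x ∧ x ≤ n) :
    KP.chargeT T = KP.chargeW ((T.map List.tail).reverse.flatten) := by
  have hseg : Seg n 1 T.reverse :=
    seg_of_rows T (le_of_eq hTlen) (fun i hi => hrow i (by omega))
  have hlenrev : T.reverse.length = n := by rw [List.length_reverse, hTlen]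
  have hcw := chargeW_seg hseg hlenrev hn
  rw [KP.chargeT, KP.readRow, hcw]
  congr 1
  rw [← List.map_reverse]

lemma adCol_length {n : ℕ} {T : List (List ℕ)} : (adCol n T).length = n := by
  unfold adCol
  exact List.length_ofFn

lemma adCol_getD_lt {n : ℕ} {T : List (List ℕ)} {i : ℕ} (h : i < n) :
    (adCol n T).getD i [] = (i + 1) :: T.getD i [] := by
  have hlen : (adCol n T).length = n := adCol_length
  rw [List.getD_eq_getElem?_getD,
    List.getElem?_eq_getElem (show i < (adCol n T).length by omega)]
  show (adCol n T)[i]'(by omega) = (i + 1) :: T.getD i []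
  unfold adCol
  rw [List.getElem_ofFn]

lemma adCol_getD_ge {n : ℕ} {T : List (List ℕ)} {i : ℕ} (h : n ≤ i) :
    (adCol n T).getD i [] = [] := by
  apply List.getD_eq_default
  rw [adCol_length]
  exact h

lemma adCol_map_tail {n : ℕ} {T : List (List ℕ)} :
    (adCol n T).map List.tail = List.ofFn (fun i : Fin n => T.getD (i : ℕ) []) := by
  unfold adCol
  rw [List.map_ofFn]
  rfl
end Stage5
section Stage6
open List

lemma A_rows {n : ℕ} {p : Fin n → ℕ} {T : List (List ℕ)}
    (hS : KP.IsSSYTr T)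
    (hsh : ∀ i : ℕ, (T.getD i []).length = if h : i < n then p ⟨i, h⟩ + 1 else 0)
    (hb : ∀ x ∈ T.flatten, 1 ≤ x ∧ x ≤ n) :
    T.length = n ∧
    (∀ i, i < n → T.getD i [] = (i + 1) :: (T.getD i []).tail) ∧
    (∀ i, i < n → (T.getD i []).tail.Pairwise (· ≤ ·) ∧
      (∀ x ∈ (T.getD i []).tail, i + 1 ≤ x ∧ x ≤ n)) := by
  have hrowsne : ∀ L ∈ T, L ≠ [] := fun L hL => (hS.1 L hL).2
  have hTlen : T.length = n := by
    apply ssytr_length_eq hrowsne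
    · intro i hi; rw [hsh i, dif_pos hi]; omega
    · intro i hi; rw [hsh i, dif_neg (by omega)]
  have hne : ∀ i, i < n → T.getD i [] ≠ [] := by
    intro i hi hcon
    have h0 := hsh i
    rw [hcon, dif_pos hi] at h0
    simp at h0
  have hheads := heads_forced hS hTlen hne hb
  refine ⟨hTlen, ?_, ?_⟩
  · intro i hi
    conv_lhs => rw [← headD_cons_tail (hne i hi)]
    rw [hheads i hi]
  · intro i hi
    have hmem : T.getD i [] ∈ T := getD_mem_self (by omega)
    have hsort := (hS.1 _ hmem).1
    have heq : T.getD i [] = (i+1) :: (T.getD i []).tail := by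
      conv_lhs => rw [← headD_cons_tail (hne i hi)]
      rw [hheads i hi]
    have hsort2 : ((i+1) :: (T.getD i []).tail).Pairwise (· ≤ ·) := by
      rw [← heq]
      exact hsort
    refine ⟨hsort.tail, ?_⟩
    intro x hx
    exact ⟨(List.pairwise_cons.mp hsort2).1 x hx,
      (hb x (List.mem_flatten.mpr ⟨_, hmem, List.mem_of_mem_tail hx⟩)).2⟩

lemma B_len_le {n : ℕ} {p : Fin n → ℕ} {T : List (List ℕ)}
    (hS : KP.IsSSYTr T)
    (hsh : ∀ i : ℕ, (T.getD i []).length = if h : i < n then p ⟨i, h⟩ else 0) :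
    T.length ≤ n := by
  by_contra h
  have h0 := hsh n
  rw [dif_neg (by omega)] at h0
  have hmem : T.getD n [] ∈ T := getD_mem_self (by omega)
  exact (hS.1 _ hmem).2 (List.length_eq_zero_iff.mp h0)

theorem KF_step (n : ℕ) (p q : Fin n → ℕ) (hp : Antitone p) (k : ℕ) :
    KP.KFcoeff n (fun i => p i + 1) (fun i => q i + 1) k = KP.KFcoeff n p q k := by
  rcases Nat.eq_zero_or_pos n with hn0 | hn
  · subst hn0
    have h1 : (fun i : Fin 0 => p i + 1) = p := funext fun i => i.elim0
    have h2 : (fun i : Fin 0 => q i + 1) = q := funext fun i => i.elim0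
    rw [h1, h2]
  set A : Set (List (List ℕ)) := {T : List (List ℕ) | KP.IsSSYTr T ∧
    (∀ i : ℕ, (T.getD i []).length = if h : i < n then p ⟨i, h⟩ + 1 else 0) ∧
    (∀ x ∈ T.flatten, 1 ≤ x ∧ x ≤ n) ∧
    (∀ i : Fin n, T.flatten.count ((i : ℕ) + 1) = q i + 1) ∧
    KP.chargeT T = k} with hAdef
  set B : Set (List (List ℕ)) := {T : List (List ℕ) | KP.IsSSYTr T ∧
    (∀ i : ℕ, (T.getD i []).length = if h : i < n then p ⟨i, h⟩ else 0) ∧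
    (∀ x ∈ T.flatten, 1 ≤ x ∧ x ≤ n) ∧
    (∀ i : Fin n, T.flatten.count ((i : ℕ) + 1) = q i) ∧
    KP.chargeT T = k} with hBdef
  -- forward: elements of A map into B via rmCol, with section adCol
  have hAB : ∀ T ∈ A, rmCol T ∈ B ∧ adCol n (rmCol T) = T := by
    intro T hT
    obtain ⟨hS, hsh, hb, hcnt, hch⟩ := hT
    obtain ⟨hTlen, hrows_eq, hrows_tail⟩ := A_rows hS hsh hb
    have hrowsne : ∀ L ∈ T, L ≠ [] := fun L hL => (hS.1 L hL).2
    have hne : ∀ i, i < n → T.getD i [] ≠ [] := by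
      intro i hi
      rw [hrows_eq i hi]
      simp
    have hheads : ∀ i, i < n → (T.getD i []).headD 0 = i + 1 := by
      intro i hi
      rw [hrows_eq i hi]
      rfl
    -- getD of rmCol
    have hmono_emp : ∀ i j, i ≤ j → (T.map List.tail).getD i [] = [] →
        (T.map List.tail).getD j [] = [] := by
      intro i j hij hi
      rw [getD_map_tail] at hi ⊢
      by_cases hjn : j < n
      · have hin : i < n := by omega
        have hti : (T.getD i []).tail.length = 0 := by rw [hi]; rfl
        rw [List.length_tail] at hti
        have hlen_i := hsh i
        rw [dif_pos hin] at hlen_i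
        have hpi : p ⟨i, hin⟩ = 0 := by omega
        have hple : p ⟨j, hjn⟩ ≤ p ⟨i, hin⟩ :=
          hp (show (⟨i, hin⟩ : Fin n) ≤ ⟨j, hjn⟩ from hij)
        have htj : (T.getD j []).tail.length = 0 := by
          rw [List.length_tail, hsh j, dif_pos hjn]
          omega
        exact List.length_eq_zero_iff.mp htj
      · have hj0 : T.getD j [] = [] := by
          apply List.length_eq_zero_iff.mp
          rw [hsh j, dif_neg hjn]
        rw [hj0]
        rfl
    have hrm_getD : ∀ i : ℕ, (rmCol T).getD i [] = (T.getD i []).tail := by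
      intro i
      rw [rmCol, filter_ne_nil_getD _ hmono_emp, getD_map_tail]
    have hflat_rm : (rmCol T).flatten = (T.map List.tail).flatten := by
      rw [rmCol, flatten_filter_ne_nil]
    have hcount_split : ∀ c, T.flatten.count c =
        (List.range' 1 n).count c + (T.map List.tail).flatten.count c := by
      intro c
      rw [count_flatten_head_tail T hrowsne c, map_headD_eq_range' hTlen hheads]
    have hrowfact : ∀ i, i < n → ∃ S, T.getD i [] = (i + 1) :: S ∧ S.Pairwise (· ≤ ·) ∧
        ∀ x ∈ S, i + 1 ≤ x ∧ x ≤ n := by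
      intro i hi
      exact ⟨(T.getD i []).tail, hrows_eq i hi, (hrows_tail i hi).1, (hrows_tail i hi).2⟩
    constructor
    · -- rmCol T ∈ B
      refine ⟨⟨?_, ?_⟩, ?_, ?_, ?_, ?_⟩
      · -- rows sorted and nonempty
        intro L hL
        obtain ⟨hLmem, hLpred⟩ := List.mem_filter.mp hL
        obtain ⟨L₀, hL₀, rfl⟩ := List.mem_map.mp hLmem
        refine ⟨(hS.1 L₀ hL₀).1.tail, ?_⟩
        simpa [List.isEmpty_iff] using hLpred
      · -- chain
        have hpw : List.Pairwise KP.RowAdj T := List.isChain_iff_pairwise.mp hS.2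
        have hpw2 : List.Pairwise KP.RowAdj (T.map List.tail) :=
          hpw.map _ (fun a b hab => rowAdj_tail hab)
        have hpw3 : List.Pairwise KP.RowAdj (rmCol T) :=
          List.Pairwise.sublist List.filter_sublist hpw2
        exact List.isChain_iff_pairwise.mpr hpw3
      · -- shape
        intro i
        rw [hrm_getD i, List.length_tail, hsh i]
        by_cases hi : i < n
        · rw [dif_pos hi, dif_pos hi]
          omega
        · rw [dif_neg hi, dif_neg hi]
      · -- entries
        intro x hx
        rw [hflat_rm] at hx
        obtain ⟨L, hL, hxL⟩ := List.mem_flatten.mp hx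
        obtain ⟨L₀, hL₀, rfl⟩ := List.mem_map.mp hL
        exact hb x (List.mem_flatten.mpr ⟨L₀, hL₀, List.mem_of_mem_tail hxL⟩)
      · -- counts
        intro i
        rw [hflat_rm]
        have hc := hcount_split ((i : ℕ) + 1)
        rw [hcnt i, count_range'_1,
          if_pos (by constructor <;> omega : 1 ≤ (i : ℕ) + 1 ∧ (i : ℕ) + 1 ≤ n)] at hc
        omega
      · -- charge
        have hcT := chargeT_eq_of_rows hn hTlen hrowfact
        have hcR : KP.chargeT (rmCol T) =
            KP.chargeW ((T.map List.tail).reverse.flatten) := by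
          rw [KP.chargeT, KP.readRow, rmCol, ← List.filter_reverse, flatten_filter_ne_nil]
        rw [hcR, ← hcT]
        exact hch
    · -- adCol n (rmCol T) = T
      have he : adCol n (rmCol T) = List.ofFn (fun i : Fin n => T.getD (i : ℕ) []) := by
        unfold adCol
        apply congrArg
        funext i
        rw [hrm_getD (i : ℕ)]
        exact (hrows_eq (i : ℕ) i.isLt).symm
      rw [he, ofFn_getD_self hTlen]
  -- backward: elements of B map into A via adCol
  have hBA : ∀ T' ∈ B, adCol n T' ∈ A ∧ rmCol (adCol n T') = T' := by
    intro T' hT'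
    obtain ⟨hS', hsh', hb', hcnt', hch'⟩ := hT'
    have hlen_le : T'.length ≤ n := B_len_le hS' hsh'
    have hrowsne' : ∀ L ∈ T', L ≠ [] := fun L hL => (hS'.1 L hL).2
    have hge := row_entries_ge hS' (fun x hx => (hb' x hx).1)
    have hrow_sorted : ∀ i : ℕ, (T'.getD i []).Pairwise (· ≤ ·) := by
      intro i
      by_cases h : i < T'.length
      · exact (hS'.1 _ (getD_mem_self h)).1
      · rw [List.getD_eq_default _ _ (by omega)]
        exact List.Pairwise.nil
    have hrow_le_n : ∀ i : ℕ, ∀ x ∈ T'.getD i [], x ≤ n := by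
      intro i x hx
      have h : i < T'.length := by
        by_contra h
        rw [List.getD_eq_default _ _ (by omega)] at hx
        simp at hx
      exact (hb' x (List.mem_flatten.mpr ⟨_, getD_mem_self h, hx⟩)).2
    have hado_len : (adCol n T').length = n := adCol_length
    have hado_ne : ∀ L ∈ adCol n T', L ≠ [] := by
      intro L hL
      rw [adCol, List.mem_ofFn] at hL
      obtain ⟨i, hi⟩ := hL
      rw [← hi]
      simp
    have hado_heads : ∀ i, i < n → ((adCol n T').getD i []).headD 0 = i + 1 := by
      intro i hi
      rw [adCol_getD_lt hi]
      rfl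
    have hado_flat_tail : ((adCol n T').map List.tail).flatten = T'.flatten := by
      rw [adCol_map_tail, ofFn_getD_flatten n T' hlen_le]
    have hrowfact : ∀ i, i < n → ∃ S, (adCol n T').getD i [] = (i + 1) :: S ∧
        S.Pairwise (· ≤ ·) ∧ ∀ x ∈ S, i + 1 ≤ x ∧ x ≤ n := by
      intro i hi
      exact ⟨T'.getD i [], adCol_getD_lt hi, hrow_sorted i,
        fun x hx => ⟨hge i x hx, hrow_le_n i x hx⟩⟩
    constructor
    · -- adCol n T' ∈ A
      refine ⟨⟨?_, ?_⟩, ?_, ?_, ?_, ?_⟩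
      · intro L hL
        rw [adCol, List.mem_ofFn] at hL
        obtain ⟨i, hi⟩ := hL
        rw [← hi]
        refine ⟨?_, by simp⟩
        rw [List.pairwise_cons]
        exact ⟨fun b hb => hge (i : ℕ) b hb, hrow_sorted (i : ℕ)⟩
      · -- chain
        change List.IsChain KP.RowAdj (adCol n T')
        rw [List.isChain_iff_getElem]
        intro i hilt
        rw [hado_len] at hilt
        have hi1 : i + 1 < n := by omega
        have egete : ∀ (m : ℕ) (hm : m < n),
            (adCol n T')[m]'(by rw [hado_len]; exact hm) = (m+1) :: T'.getD m [] := by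
          intro m hm
          have h1 := adCol_getD_lt (T := T') hm
          rw [List.getD_eq_getElem _ _ (by rw [hado_len]; exact hm)] at h1
          exact h1
        rw [egete i (by omega), egete (i+1) hi1]
        constructor
        · -- lengths
          simp only [List.length_cons]
          have l1 := hsh' i
          have l2 := hsh' (i+1)
          rw [dif_pos (show i < n by omega)] at l1
          rw [dif_pos hi1] at l2
          have hple : p ⟨i+1, hi1⟩ ≤ p ⟨i, by omega⟩ :=
            hp (show (⟨i, by omega⟩ : Fin n) ≤ ⟨i+1, hi1⟩ from by simp)
          omega
        · intro j x hx y hy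
          cases j with
          | zero =>
            have hx' : some (i + 1) = some x := hx
            have hy' : some (i + 1 + 1) = some y := hy
            have := Option.some.inj hx'
            have := Option.some.inj hy'
            omega
          | succ j =>
            have hx' : (T'.getD i [])[j]? = some x := hx
            have hy' : (T'.getD (i+1) [])[j]? = some y := hy
            have hlt : i + 1 < T'.length := by
              by_contra h
              rw [List.getD_eq_default _ _ (by omega)] at hy'
              simp at hy'
            exact (chain'_getD hS'.2 hlt).2 j x hx' y hy'
      · -- shape
        intro i
        by_cases hi : i < n
        · rw [adCol_getD_lt hi, dif_pos hi, List.length_cons]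
          have := hsh' i
          rw [dif_pos hi] at this
          omega
        · rw [adCol_getD_ge (by omega), dif_neg hi]
          rfl
      · -- entries
        intro x hx
        obtain ⟨L, hL, hxL⟩ := List.mem_flatten.mp hx
        rw [adCol, List.mem_ofFn] at hL
        obtain ⟨i, hi⟩ := hL
        rw [← hi] at hxL
        rcases List.mem_cons.mp hxL with rfl | hxL
        · constructor
          · omega
          · have := i.isLt
            omega
        · exact ⟨by have := hge (i : ℕ) x hxL; omega, hrow_le_n (i : ℕ) x hxL⟩
      · -- counts
        intro i
        rw [count_flatten_head_tail _ hado_ne, map_headD_eq_range' hado_len hado_heads,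
          hado_flat_tail, hcnt' i, count_range'_1,
          if_pos (by constructor <;> omega : 1 ≤ (i : ℕ) + 1 ∧ (i : ℕ) + 1 ≤ n)]
        omega
      · -- charge
        have hcT := chargeT_eq_of_rows hn hado_len hrowfact
        rw [hcT, adCol_map_tail, ofFn_getD_flatten_rev n T' hlen_le]
        rw [KP.chargeT, KP.readRow] at hch'
        exact hch'
    · -- rmCol (adCol n T') = T'
      rw [rmCol, adCol_map_tail]
      exact ofFn_getD_filter n T' hlen_le hrowsne'
  -- assemble
  have e1 : KP.KFcoeff n (fun i => p i + 1) (fun i => q i + 1) k = A.ncard := rfl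
  have e2 : KP.KFcoeff n p q k = B.ncard := rfl
  rw [e1, e2]
  have himg : rmCol '' A = B := by
    apply Set.ext
    intro T'
    constructor
    · rintro ⟨T, hT, rfl⟩
      exact (hAB T hT).1
    · intro hT'
      exact ⟨adCol n T', (hBA T' hT').1, (hBA T' hT').2⟩
  have hinj : Set.InjOn rmCol A := by
    intro T1 h1 T2 h2 heq
    rw [← (hAB T1 h1).2, ← (hAB T2 h2).2, heq]
  rw [← himg, Set.ncard_image_of_injOn hinj]
end Stage6
theorem kostkaFoulkes_stable (n : ℕ) (lam mu : Fin n → ℤ)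
    (hlam : Antitone lam) (hmu : Antitone mu) (d d' : ℕ)
    (hd₁ : ∀ i, 0 ≤ lam i + d) (hd₂ : ∀ i, 0 ≤ mu i + d)
    (hd₁' : ∀ i, 0 ≤ lam i + d') (hd₂' : ∀ i, 0 ≤ mu i + d') (k : ℕ) :
    KFcoeff n (fun i => (lam i + d).toNat) (fun i => (mu i + d).toNat) k =
    KFcoeff n (fun i => (lam i + d').toNat) (fun i => (mu i + d').toNat) k := by
  have main : ∀ (e : ℕ), (∀ i, 0 ≤ lam i + e) → (∀ i, 0 ≤ mu i + e) → ∀ (j : ℕ),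
      KP.KFcoeff n (fun i => (lam i + e).toNat) (fun i => (mu i + e).toNat) k =
      KP.KFcoeff n (fun i => (lam i + (e + j : ℕ)).toNat)
        (fun i => (mu i + (e + j : ℕ)).toNat) k := by
    intro e he1 he2 j
    induction j with
    | zero => simp
    | succ j ih =>
      rw [ih]
      have hanti : Antitone (fun i => (lam i + ((e + j : ℕ) : ℤ)).toNat) := by
        intro a b hab
        have := hlam hab
        simp only []
        omega
      have e1 : (fun i : Fin n => (lam i + ((e + (j+1) : ℕ) : ℤ)).toNat) =
          fun i : Fin n => (lam i + ((e + j : ℕ) : ℤ)).toNat + 1 := by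
        funext i
        have := he1 i
        push_cast
        omega
      have e2 : (fun i : Fin n => (mu i + ((e + (j+1) : ℕ) : ℤ)).toNat) =
          fun i : Fin n => (mu i + ((e + j : ℕ) : ℤ)).toNat + 1 := by
        funext i
        have := he2 i
        push_cast
        omega
      rw [e1, e2]
      exact (KF_step n _ _ hanti k).symm
  have h1 := main d hd₁ hd₂ (max d d' - d)
  have h2 := main d' hd₁' hd₂' (max d d' - d')
  rw [show d + (max d d' - d) = max d d' from by omega] at h1
  rw [show d' + (max d d' - d') = max d d' from by omega] at h2
  rw [h1, h2]

end KP
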